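/- For every C ∈ ch^q_F(A), the closure of S(C) in M(A) (i.e. M(A) intersected with the closure of S(C) in ℂ^ℓ) equals {x + iv ∈ M(A) : x ∈ tilde(C), v ∈ τ(X_C)}. -/

import Mathlib

open Set

namespace IY

/-- An affine hyperplane arrangement in `ℝ^ℓ`, given by `n` affine-linear forms
with nonzero linear parts; the `i`-th hyperplane is the zero set of `α i`. -/
structure Arrangement (ℓ n : ℕ) where
  α : Fin n → ((Fin ℓ → ℝ) →ᵃ[ℝ] ℝ)
  nonzero : ∀ i, (α i).linear ≠ 0

namespace Arrangement

variable {ℓ n : ℕ} (A : Arrangement ℓ n)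

/-- The hyperplane `H_i = {α_i = 0}`. -/
def H (i : Fin n) : Set (Fin ℓ → ℝ) := {x | A.α i x = 0}

/-- The real complement of the subarrangement indexed by `s`. -/
def compOn (s : Set (Fin n)) : Set (Fin ℓ → ℝ) := {x | ∀ i ∈ s, A.α i x ≠ 0}

/-- Chambers of the subarrangement indexed by `s` : connected components of its
real complement. -/
def IsChamberOn (s : Set (Fin n)) (C : Set (Fin ℓ → ℝ)) : Prop :=
  ∃ x ∈ A.compOn s, C = connectedComponentIn (A.compOn s) x

/-- Chambers of the full arrangement. -/
def IsChamber (C : Set (Fin ℓ → ℝ)) : Prop := A.IsChamberOn Set.univ C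

/-- The intersection poset of the subarrangement indexed by `s` : nonempty
intersections of subfamilies (the empty intersection giving `ℝ^ℓ`). -/
def LOn (s : Set (Fin n)) (X : Set (Fin ℓ → ℝ)) : Prop :=
  X.Nonempty ∧ ∃ t : Set (Fin n), t ⊆ s ∧ X = ⋂ i ∈ t, A.H i

/-- The intersection poset `L(A)`. -/
def L (X : Set (Fin ℓ → ℝ)) : Prop := A.LOn Set.univ X

/-- The real part of a point of `ℂ^ℓ`. -/
def reP {ℓ : ℕ} (z : Fin ℓ → ℂ) : Fin ℓ → ℝ := fun j => (z j).re

/-- The imaginary part of a point of `ℂ^ℓ`. -/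
def imP {ℓ : ℕ} (z : Fin ℓ → ℂ) : Fin ℓ → ℝ := fun j => (z j).im

/-- The point `x + iv` of `ℂ^ℓ`. -/
def mkC {ℓ : ℕ} (x v : Fin ℓ → ℝ) : Fin ℓ → ℂ := fun j => ⟨x j, v j⟩

/-- The complexified complement `M(A) = ℂ^ℓ \ ⋃ H_ℂ`; a point `x + iv` lies on
`H_ℂ = {α_ℂ = 0}` iff `α(x) = 0` and the linear part of `α` kills `v`. -/
def M : Set (Fin ℓ → ℂ) :=
  {z | ∀ i : Fin n, ¬(A.α i (reP z) = 0 ∧ (A.α i).linear (imP z) = 0)}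

end Arrangement

/-- Dimension of a subset of `ℝ^ℓ` (for affine subspaces, their dimension). -/
noncomputable def dimS {ℓ : ℕ} (X : Set (Fin ℓ → ℝ)) : ℕ :=
  Module.finrank ℝ (affineSpan ℝ X).direction

/-- The direction `τ(X)` of (the affine span of) a subset of `ℝ^ℓ`. -/
noncomputable def tau {ℓ : ℕ} (X : Set (Fin ℓ → ℝ)) : Submodule ℝ (Fin ℓ → ℝ) :=
  (affineSpan ℝ X).direction

/-- A flag in `ℝ^ℓ` given by defining affine-linear forms `h_1, …, h_ℓ`
(0-indexed: `h j` is the form `h_{j+1}`). -/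
structure Flag (ℓ : ℕ) where
  h : Fin ℓ → ((Fin ℓ → ℝ) →ᵃ[ℝ] ℝ)

namespace Flag

variable {ℓ : ℕ} (𝓕 : Flag ℓ)

/-- The flag subspace `F^q = {h_{q+1} = ⋯ = h_ℓ = 0}`. -/
def F (q : ℕ) : Set (Fin ℓ → ℝ) := {x | ∀ j : Fin ℓ, q ≤ (j : ℕ) → 𝓕.h j x = 0}

/-- `𝓕.hq q` is the form `h_q` in 1-indexed notation (junk value `0` out of range). -/
noncomputable def hq (q : ℕ) : (Fin ℓ → ℝ) →ᵃ[ℝ] ℝ :=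
  if hlt : q - 1 < ℓ then 𝓕.h ⟨q - 1, hlt⟩ else 0

end Flag

/-- Genericity of the flag: for every `X ∈ L(A)`, `F^q ∩ X` is an affine subspace
of dimension `q + dim X - ℓ`, empty when `q + dim X < ℓ`. -/
def GenericFlag {ℓ n : ℕ} (A : Arrangement ℓ n) (𝓕 : Flag ℓ) : Prop :=
  ∀ X, A.L X → ∀ q, q ≤ ℓ →
    (ℓ ≤ q + dimS X →
      ∃ W : AffineSubspace ℝ (Fin ℓ → ℝ), (W : Set (Fin ℓ → ℝ)).Nonempty ∧
        (W : Set (Fin ℓ → ℝ)) = 𝓕.F q ∩ X ∧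
        Module.finrank ℝ W.direction = q + dimS X - ℓ) ∧
    (q + dimS X < ℓ → 𝓕.F q ∩ X = ∅)

/-- Condition (1) of the Assumption, for the subarrangement indexed by `s`:
if a chamber `C` meets `F^q` but not `F^{q-1}`, then `h_q > 0` on `C ∩ F^q`. -/
def Cond1On {ℓ n : ℕ} (A : Arrangement ℓ n) (s : Set (Fin n)) (𝓕 : Flag ℓ) : Prop :=
  ∀ q : ℕ, 1 ≤ q → q ≤ ℓ → ∀ C, A.IsChamberOn s C →
    (C ∩ 𝓕.F q).Nonempty → C ∩ 𝓕.F (q - 1) = ∅ →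
    ∀ x ∈ C ∩ 𝓕.F q, 0 < 𝓕.hq q x

/-- Condition (2) of the Assumption, for the subarrangement indexed by `s`:
distinct `X, X'` in the intersection poset of dimension `ℓ - q` have different
`h_q`-values at their intersection points with `F^q`. -/
def Cond2On {ℓ n : ℕ} (A : Arrangement ℓ n) (s : Set (Fin n)) (𝓕 : Flag ℓ) : Prop :=
  ∀ q : ℕ, 1 ≤ q → q ≤ ℓ → ∀ X X', A.LOn s X → A.LOn s X' →
    dimS X = ℓ - q → dimS X' = ℓ - q → X ≠ X' →
    ∀ p ∈ X ∩ 𝓕.F q, ∀ p' ∈ X' ∩ 𝓕.F q, 𝓕.hq q p ≠ 𝓕.hq q p'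

/-- `C ∈ ch^q_F(A)` : `C` is a chamber meeting `F^q` but not `F^{q-1}`
(the latter condition being empty for `q = 0`, since `F^{-1} = ∅`). -/
def ChF {ℓ n : ℕ} (A : Arrangement ℓ n) (𝓕 : Flag ℓ) (q : ℕ)
    (C : Set (Fin ℓ → ℝ)) : Prop :=
  A.IsChamber C ∧ (C ∩ 𝓕.F q).Nonempty ∧ (q = 0 ∨ C ∩ 𝓕.F (q - 1) = ∅)

/-- `X = X_C` for `C ∈ ch^q_F(A)` : `X ∈ L(A)` has dimension `ℓ - q` and meets
`F^q` exactly in the unique minimum point of `h_q` on the closure of `C ∩ F^q`. -/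
def IsXC {ℓ n : ℕ} (A : Arrangement ℓ n) (𝓕 : Flag ℓ) (q : ℕ)
    (C X : Set (Fin ℓ → ℝ)) : Prop :=
  A.L X ∧ dimS X = ℓ - q ∧
  ∃ p : Fin ℓ → ℝ, X ∩ 𝓕.F q = {p} ∧ p ∈ closure (C ∩ 𝓕.F q) ∧
    ∀ y ∈ closure (C ∩ 𝓕.F q), 𝓕.hq q p ≤ 𝓕.hq q y

/-- Indices of the hyperplanes parallel to `X`, i.e. `A_{[X]} = {H : τ(X) ⊆ τ(H)}`. -/
def parIdx {ℓ n : ℕ} (A : Arrangement ℓ n) (X : Set (Fin ℓ → ℝ)) : Set (Fin n) :=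
  {i | tau X ≤ LinearMap.ker (A.α i).linear}

/-- `H_i ∈ Sep(C, C')` : the hyperplane `H_i` separates the chambers `C` and `C'`. -/
def SepCh {ℓ n : ℕ} (A : Arrangement ℓ n) (C C' : Set (Fin ℓ → ℝ)) (i : Fin n) : Prop :=
  ((∀ x ∈ C, 0 < A.α i x) ∧ (∀ y ∈ C', A.α i y < 0)) ∨
  ((∀ x ∈ C, A.α i x < 0) ∧ (∀ y ∈ C', 0 < A.α i y))

/-- `H_i ∈ Sep(p₁, p₂)` : the hyperplane `H_i` meets the segment `[p₁, p₂]`. -/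
def SepPt {ℓ n : ℕ} (A : Arrangement ℓ n) (p₁ p₂ : Fin ℓ → ℝ) (i : Fin n) : Prop :=
  ∃ w ∈ segment ℝ p₁ p₂, A.α i w = 0

/-- The piece `S(C)` attached to a chamber with `τ(X_C) = T` and base point `p`:
all `x + iv` with `v ∈ T` and `v ∉ τ(H)` for every `H ∈ Sep(p, x)`. -/
def S {ℓ n : ℕ} (A : Arrangement ℓ n) (T : Submodule ℝ (Fin ℓ → ℝ))
    (p : Fin ℓ → ℝ) : Set (Fin ℓ → ℂ) :=
  {z | Arrangement.imP z ∈ T ∧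
    ∀ i : Fin n, SepPt A p (Arrangement.reP z) i →
      (A.α i).linear (Arrangement.imP z) ≠ 0}

end IY

namespace IY
open Arrangement

variable {ℓ n : ℕ}

theorem contAlpha (A : Arrangement ℓ n) (i : Fin n) : Continuous (A.α i) :=
  (A.α i).continuous_of_finiteDimensional

theorem continuous_reP : Continuous (Arrangement.reP (ℓ := ℓ)) :=
  continuous_pi fun j => Complex.continuous_re.comp (continuous_apply j)

theorem continuous_imP : Continuous (Arrangement.imP (ℓ := ℓ)) :=
  continuous_pi fun j => Complex.continuous_im.comp (continuous_apply j)

theorem isOpen_compOn (A : Arrangement ℓ n) (s : Set (Fin n)) : IsOpen (A.compOn s) := by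
  have h : A.compOn s = ⋂ i : Fin n, {x | i ∈ s → A.α i x ≠ 0} := by
    ext x; simp [Arrangement.compOn]
  rw [h]
  refine isOpen_iInter_of_finite fun i => ?_
  by_cases hi : i ∈ s
  · have h2 : {x : Fin ℓ → ℝ | i ∈ s → A.α i x ≠ 0} = (A.α i) ⁻¹' ({0}ᶜ) := by
      ext x; simp [hi]
    rw [h2]
    exact isOpen_compl_singleton.preimage (contAlpha A i)
  · have h2 : {x : Fin ℓ → ℝ | i ∈ s → A.α i x ≠ 0} = Set.univ := by
      ext x; simp [hi]
    rw [h2]; exact isOpen_univ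

theorem convex_signSet (A : Arrangement ℓ n) (s : Set (Fin n)) (x : Fin ℓ → ℝ) :
    Convex ℝ {y | ∀ i ∈ s, 0 < A.α i x * A.α i y} := by
  have h : {y | ∀ i ∈ s, 0 < A.α i x * A.α i y}
      = ⋂ i ∈ s, {y | 0 < A.α i x * A.α i y} := by
    ext y; simp
  rw [h]
  refine convex_iInter₂ fun i hi => ?_
  have h2 : {y : Fin ℓ → ℝ | 0 < A.α i x * A.α i y}
      = (A.α i x • A.α i) ⁻¹' (Set.Ioi 0) := by
    ext y
    simp [AffineMap.coe_smul, Pi.smul_apply, smul_eq_mul]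
  rw [h2]
  exact (convex_Ioi (0:ℝ)).affine_preimage _

theorem connectedComponentIn_compOn (A : Arrangement ℓ n) (s : Set (Fin n)) {x : Fin ℓ → ℝ}
    (hx : x ∈ A.compOn s) :
    connectedComponentIn (A.compOn s) x = {y | ∀ i ∈ s, 0 < A.α i x * A.α i y} := by
  set O := {y | ∀ i ∈ s, 0 < A.α i x * A.α i y} with hO
  have hOsub : O ⊆ A.compOn s := by
    intro y hy i hi h0
    have := hy i hi
    rw [h0, mul_zero] at this
    exact lt_irrefl 0 this
  have hxO : x ∈ O := fun i hi => mul_self_pos.2 (hx i hi)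
  have hOopen : IsOpen O := by
    have h : O = ⋂ i : Fin n, {y | i ∈ s → 0 < A.α i x * A.α i y} := by
      ext y; simp [hO]
    rw [h]
    refine isOpen_iInter_of_finite fun i => ?_
    by_cases hi : i ∈ s
    · have h2 : {y : Fin ℓ → ℝ | i ∈ s → 0 < A.α i x * A.α i y}
          = (fun y => A.α i x * A.α i y) ⁻¹' (Set.Ioi 0) := by
        ext y; simp [hi]
      rw [h2]
      exact isOpen_Ioi.preimage (continuous_const.mul (contAlpha A i))
    · have h2 : {y : Fin ℓ → ℝ | i ∈ s → 0 < A.α i x * A.α i y} = Set.univ := by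
        ext y; simp [hi]
      rw [h2]; exact isOpen_univ
  apply Set.Subset.antisymm
  · set V := {y | ∃ i ∈ s, A.α i x * A.α i y < 0} with hV
    have hVopen : IsOpen V := by
      have h : V = ⋃ i ∈ s, (fun y => A.α i x * A.α i y) ⁻¹' (Set.Iio 0) := by
        ext y; simp [hV]
      rw [h]
      exact isOpen_biUnion fun i _ =>
        isOpen_Iio.preimage (continuous_const.mul (contAlpha A i))
    have hdisj : Disjoint O V := by
      rw [Set.disjoint_left]
      rintro z hz ⟨i, hi, hneg⟩
      exact lt_asymm (hz i hi) hneg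
    have hsub : connectedComponentIn (A.compOn s) x ⊆ O ∪ V := by
      intro y hy
      have hyc := connectedComponentIn_subset (A.compOn s) x hy
      by_cases h : ∀ i ∈ s, 0 < A.α i x * A.α i y
      · exact Or.inl h
      · push_neg at h
        obtain ⟨i, hi, hle⟩ := h
        exact Or.inr ⟨i, hi, lt_of_le_of_ne hle (mul_ne_zero (hx i hi) (hyc i hi))⟩
    exact (isPreconnected_connectedComponentIn).subset_left_of_subset_union hOopen hVopen
      hdisj hsub ⟨x, mem_connectedComponentIn hx, hxO⟩
  · exact (convex_signSet A s x).isPreconnected.subset_connectedComponentIn hxO hOsub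

theorem exists_generic (A : Arrangement ℓ n) (T : Submodule ℝ (Fin ℓ → ℝ)) :
    ∃ w ∈ T, ∀ i : Fin n, ¬T ≤ LinearMap.ker (A.α i).linear → (A.α i).linear w ≠ 0 := by
  classical
  by_contra hcon
  push_neg at hcon
  set p : Fin n → Subspace ℝ T := fun i =>
    if T ≤ LinearMap.ker (A.α i).linear then ⊥
    else LinearMap.ker ((A.α i).linear.comp T.subtype) with hp
  have hcover : ⋃ i, (p i : Set T) = Set.univ := by
    ext u
    simp only [Set.mem_iUnion, Set.mem_univ, iff_true]
    obtain ⟨i, hi, h0⟩ := hcon u.1 u.2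
    refine ⟨i, ?_⟩
    rw [hp]
    simp only [if_neg hi, SetLike.mem_coe, LinearMap.mem_ker, LinearMap.comp_apply,
      Submodule.coe_subtype]
    exact h0
  obtain ⟨i, hi⟩ := Subspace.exists_eq_top_of_iUnion_eq_univ hcover
  by_cases hle : T ≤ LinearMap.ker (A.α i).linear
  · rw [hp] at hi
    simp only [if_pos hle] at hi
    have htriv : ∀ u ∈ T, u = (0 : Fin ℓ → ℝ) := by
      intro u hu
      have h1 : (⟨u, hu⟩ : T) ∈ (⊥ : Subspace ℝ T) := hi ▸ Submodule.mem_top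
      simpa using congrArg Subtype.val ((Submodule.mem_bot ℝ).1 h1)
    obtain ⟨j, hj, _⟩ := hcon 0 T.zero_mem
    refine hj fun u hu => ?_
    rw [htriv u hu]
    exact (LinearMap.ker _).zero_mem
  · rw [hp] at hi
    simp only [if_neg hle] at hi
    refine hle fun u hu => ?_
    have h1 : (⟨u, hu⟩ : T) ∈ LinearMap.ker ((A.α i).linear.comp T.subtype) :=
      hi ▸ Submodule.mem_top
    simpa [LinearMap.mem_ker] using h1

end IY

namespace IY
open Arrangement

/-- The closure of `S(C)` in `M(A)` equals
`{x + iv ∈ M(A) : x ∈ tilde(C), v ∈ τ(X_C)}`. -/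
theorem closure_S_in_M (ℓ n : ℕ) (A : Arrangement ℓ n) (𝓕 : Flag ℓ)
    (hind : LinearIndependent ℝ fun j : Fin ℓ => (𝓕.h j).linear)
    (hgen : GenericFlag A 𝓕)
    (h1 : Cond1On A Set.univ 𝓕) (h2 : Cond2On A Set.univ 𝓕)
    (q : ℕ) (hq2 : q ≤ ℓ)
    (C X : Set (Fin ℓ → ℝ))
    (hC : ChF A 𝓕 q C) (hX : IsXC A 𝓕 q C X)
    (pC : Fin ℓ → ℝ) (hpC : pC ∈ C ∩ 𝓕.F q)
    (Ct : Set (Fin ℓ → ℝ)) (hCt : A.IsChamberOn (parIdx A X) Ct) (hCCt : C ⊆ Ct) :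
    A.M ∩ closure (S A (tau X) pC) =
      {z : Fin ℓ → ℂ | z ∈ A.M ∧ reP z ∈ Ct ∧ imP z ∈ tau X} := by
  classical
  obtain ⟨x₀, hx₀, hCtdef⟩ := hCt
  set T := tau X with hT
  set P := parIdx A X with hPdef
  have hPker : ∀ i ∈ P, T ≤ LinearMap.ker (A.α i).linear := fun i hi => hi
  have hpCt : pC ∈ Ct := hCCt hpC.1
  have hCtcomp : Ct = connectedComponentIn (A.compOn P) pC := by
    rw [hCtdef] at hpCt ⊢
    exact connectedComponentIn_eq hpCt
  have hCtsub : Ct ⊆ A.compOn P := by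
    rw [hCtcomp]; exact connectedComponentIn_subset _ _
  have hCtconv : Convex ℝ Ct := by
    rw [hCtdef, connectedComponentIn_compOn A P hx₀]
    exact convex_signSet A P x₀
  have hTclosed : IsClosed ((T : Submodule ℝ (Fin ℓ → ℝ)) : Set (Fin ℓ → ℝ)) :=
    Submodule.closed_of_finiteDimensional T
  have hSim : S A T pC ⊆ imP ⁻¹' ((T : Submodule ℝ (Fin ℓ → ℝ)) : Set (Fin ℓ → ℝ)) :=
    fun z hz => hz.1
  have hSre : S A T pC ⊆ reP ⁻¹' Ct := by
    intro z' hz'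
    have hseg : segment ℝ pC (reP z') ⊆ A.compOn P := by
      intro u hu i hi h0
      exact hz'.2 i ⟨u, hu, h0⟩ (hPker i hi hz'.1)
    have hsub2 : segment ℝ pC (reP z') ⊆ connectedComponentIn (A.compOn P) pC :=
      (convex_segment pC (reP z')).isPreconnected.subset_connectedComponentIn
        (left_mem_segment ℝ pC (reP z')) hseg
    have : reP z' ∈ connectedComponentIn (A.compOn P) pC :=
      hsub2 (right_mem_segment ℝ pC (reP z'))
    rw [Set.mem_preimage, hCtcomp]
    exact this
  ext z
  simp only [Set.mem_inter_iff, Set.mem_setOf_eq]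
  constructor
  · rintro ⟨hzM, hzcl⟩
    have hv : imP z ∈ T := closure_minimal hSim (hTclosed.preimage continuous_imP) hzcl
    have hxcomp : reP z ∈ A.compOn P := by
      intro i hi h0
      exact hzM i ⟨h0, hPker i hi hv⟩
    have hxcl : reP z ∈ closure Ct := by
      have h1 : closure (S A T pC) ⊆ closure (reP ⁻¹' Ct) := closure_mono hSre
      exact continuous_reP.closure_preimage_subset Ct (h1 hzcl)
    refine ⟨hzM, ?_, hv⟩
    have hUopen : IsOpen (connectedComponentIn (A.compOn P) (reP z)) :=
      (isOpen_compOn A P).connectedComponentIn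
    obtain ⟨y, hyU, hyCt⟩ := mem_closure_iff.1 hxcl _ hUopen (mem_connectedComponentIn hxcomp)
    have e1 := connectedComponentIn_eq hyU
    have e2 : connectedComponentIn (A.compOn P) pC = connectedComponentIn (A.compOn P) y := by
      apply connectedComponentIn_eq
      rw [← hCtcomp]; exact hyCt
    rw [hCtcomp, e2, ← e1]
    exact mem_connectedComponentIn hxcomp
  · rintro ⟨hzM, hx, hv⟩
    obtain ⟨w, hwT, hw⟩ := exists_generic A T
    have hSepP : ∀ i ∈ P, ¬ SepPt A pC (reP z) i := by
      rintro i hi ⟨u, hu, h0⟩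
      exact hCtsub (hCtconv.segment_subset hpCt hx hu) i hi h0
    set f : ℝ → (Fin ℓ → ℂ) := fun t => mkC (reP z) (imP z + t • w) with hf
    have hre : ∀ t, reP (f t) = reP z := fun t => rfl
    have himf : ∀ t : ℝ, imP (f t) = imP z + t • w := fun t => rfl
    have hf0 : f 0 = z := by
      funext j
      apply Complex.ext
      · rfl
      · show imP z j + (0:ℝ) • w j = (z j).im
        simp [Arrangement.imP]
    have hcont : Continuous f := by
      apply continuous_pi
      intro j
      have heq : (fun t : ℝ => f t j) =
          fun t : ℝ => (reP z j : ℂ) + ((imP z j + t * w j : ℝ) : ℂ) * Complex.I := by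
        funext t
        show (⟨reP z j, imP z j + t * w j⟩ : ℂ) = _
        exact Complex.mk_eq_add_mul_I ..
      rw [heq]
      exact continuous_const.add ((Complex.continuous_ofReal.comp
        (continuous_const.add (continuous_id.mul continuous_const))).mul continuous_const)
    have htend : Filter.Tendsto f (nhdsWithin 0 (Set.Ioi 0)) (nhds z) := by
      have h1 := hcont.tendsto 0
      rw [hf0] at h1
      exact h1.mono_left nhdsWithin_le_nhds
    have hall : ∀ i : Fin n, ∀ᶠ t in nhdsWithin (0:ℝ) (Set.Ioi 0),
        SepPt A pC (reP (f t)) i → (A.α i).linear (imP (f t)) ≠ 0 := by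
      intro i
      have him : ∀ t : ℝ, (A.α i).linear (imP (f t)) =
          (A.α i).linear (imP z) + t * (A.α i).linear w := by
        intro t
        rw [himf t, map_add, map_smul, smul_eq_mul]
      by_cases hsep : SepPt A pC (reP z) i
      · have hiP : i ∉ P := fun h => hSepP i h hsep
        have hwne : (A.α i).linear w ≠ 0 := hw i hiP
        by_cases ha : (A.α i).linear (imP z) = 0
        · filter_upwards [self_mem_nhdsWithin] with t ht _
          rw [him t, ha, zero_add]
          exact mul_ne_zero (ne_of_gt ht) hwne
        · have htt : Filter.Tendsto
              (fun t : ℝ => (A.α i).linear (imP z) + t * (A.α i).linear w)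
              (nhds 0) (nhds ((A.α i).linear (imP z))) := by
            have h2 : Filter.Tendsto (fun t : ℝ => t * (A.α i).linear w)
                (nhds 0) (nhds 0) := by
              simpa using (continuous_mul_right ((A.α i).linear w)).tendsto (0:ℝ)
            simpa using (tendsto_const_nhds (x := (A.α i).linear (imP z))).add h2
          have h3 := htt.eventually_ne ha
          filter_upwards [h3.filter_mono nhdsWithin_le_nhds] with t ht _
          rw [him t]; exact ht
      · filter_upwards with t hsep'
        rw [hre t] at hsep'
        exact absurd hsep' hsep
    have hev : ∀ᶠ t in nhdsWithin (0:ℝ) (Set.Ioi 0), f t ∈ S A T pC := by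
      filter_upwards [Filter.eventually_all.2 hall] with t ht
      refine ⟨?_, ht⟩
      rw [himf t]
      exact T.add_mem hv (T.smul_mem t hwT)
    exact ⟨hzM, mem_closure_of_tendsto htend hev⟩

end IY
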